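/- Let B be an alternating bilinear form on the finite 𝔽₂-vector space V and let Q denote the set of quadratic refinements of B. Then for every x ∈ V, ∑_{q ∈ Q} ( (−1)^{q(x)} · ∑_{x′ ∈ V} (−1)^{q(x′)} ) = Fintype.card V. In particular, when dim V = 2g this says ∑_{q ∈ Q} Arf(q) · (−1)^{q(x)} = 2^g for every x ∈ V. -/

import Mathlib

open scoped Classical

namespace QRArfAux

variable {V : Type*} [AddCommGroup V] [Module (ZMod 2) V] [Fintype V]

lemma z2 : ∀ a : ZMod 2, a + a = 0 := by decide

lemma z2eq : ∀ a b : ZMod 2, a + b = 0 → a = b := by decide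

lemma quad_add : ∀ a b c d e : ZMod 2, (a + b + e) + (c + d + e) = (a + c) + (b + d) := by decide

lemma quad_add' : ∀ a b c d e : ZMod 2, (a + b + e) + (c + d) = (a + c) + (b + d) + e := by decide

lemma hcanc : ∀ a c : ZMod 2, a + c + c = a := by decide

lemma hre : ∀ a c : ZMod 2, a = c + (a + c) := by decide

lemma e_add : ∀ a b : ZMod 2,
    ((-1 : ℤ)) ^ ((a + b).val) = (-1 : ℤ) ^ a.val * (-1 : ℤ) ^ b.val := by decide

omit [Fintype V] in
lemma vadd_self (v : V) : v + v = 0 := by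
  have h2 : (2 : ZMod 2) = 0 := by decide
  calc v + v = (2 : ZMod 2) • v := (two_smul _ v).symm
  _ = (0 : ZMod 2) • v := by rw [h2]
  _ = 0 := zero_smul _ v

omit [Fintype V] in
lemma Bsymm (B : V →ₗ[ZMod 2] V →ₗ[ZMod 2] ZMod 2) (halt : ∀ x : V, B x x = 0)
    (x y : V) : B x y = B y x := by
  have h := halt (x + y)
  simp only [map_add, LinearMap.add_apply, halt, zero_add, add_zero] at h
  first
  | exact z2eq _ _ h
  | exact (z2eq _ _ h).symm

lemma exists_qr (B : V →ₗ[ZMod 2] V →ₗ[ZMod 2] ZMod 2) (halt : ∀ x : V, B x x = 0) :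
    ∃ q : V → ZMod 2, ∀ x y, q (x + y) = q x + q y + B x y := by
  let b := Module.finBasis (ZMod 2) V
  set n := Module.finrank (ZMod 2) V
  set C : V → V → ZMod 2 := fun x y =>
    ∑ i, ∑ j, if i < j then b.repr x i * b.repr y j * B (b i) (b j) else 0 with hC
  have hB1 : ∀ (x y : V), B x y = ∑ i, b.repr x i * B (b i) y := by
    intro x y
    conv_lhs => rw [← b.sum_repr x]
    simp only [map_sum, map_smul, LinearMap.sum_apply, LinearMap.smul_apply, smul_eq_mul]
  have hB : ∀ x y : V, B x y = ∑ i, ∑ j, b.repr x i * b.repr y j * B (b i) (b j) := by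
    intro x y
    rw [hB1]
    refine Finset.sum_congr rfl fun i _ => ?_
    have : B (b i) y = ∑ j, b.repr y j * B (b i) (b j) := by
      conv_lhs => rw [← b.sum_repr y]
      simp only [map_sum, map_smul, smul_eq_mul]
    rw [this, Finset.mul_sum]
    exact Finset.sum_congr rfl fun j _ => by ring
  have key : ∀ x y : V, C x y + C y x = B x y := by
    intro x y
    have hswap : C y x
        = ∑ i, ∑ j, if j < i then b.repr x i * b.repr y j * B (b i) (b j) else 0 := by
      show (∑ i, ∑ j, if i < j then b.repr y i * b.repr x j * B (b i) (b j) else 0) = _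
      rw [Finset.sum_comm]
      refine Finset.sum_congr rfl fun i _ => Finset.sum_congr rfl fun j _ => ?_
      by_cases h : j < i
      · rw [if_pos h, if_pos h, Bsymm B halt (b j) (b i)]; ring
      · rw [if_neg h, if_neg h]
    rw [hB, hswap, hC]
    rw [← Finset.sum_add_distrib]
    refine Finset.sum_congr rfl fun i _ => ?_
    rw [← Finset.sum_add_distrib]
    refine Finset.sum_congr rfl fun j _ => ?_
    rcases lt_trichotomy i j with h | h | h
    · rw [if_pos h, if_neg (asymm h), add_zero]
    · subst h; simp [halt]
    · rw [if_neg (asymm h), if_pos h, zero_add]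
  have hadd : ∀ x x' y : V, C (x + x') y = C x y + C x' y := by
    intro x x' y
    rw [hC]
    simp only []
    rw [← Finset.sum_add_distrib]
    refine Finset.sum_congr rfl fun i _ => ?_
    rw [← Finset.sum_add_distrib]
    refine Finset.sum_congr rfl fun j _ => ?_
    by_cases h : i < j
    · simp only [if_pos h, map_add, Finsupp.add_apply]; ring
    · simp only [if_neg h, add_zero]
  have hadd' : ∀ x y y' : V, C x (y + y') = C x y + C x y' := by
    intro x y y'
    rw [hC]
    simp only []
    rw [← Finset.sum_add_distrib]
    refine Finset.sum_congr rfl fun i _ => ?_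
    rw [← Finset.sum_add_distrib]
    refine Finset.sum_congr rfl fun j _ => ?_
    by_cases h : i < j
    · simp only [if_pos h, map_add, Finsupp.add_apply]; ring
    · simp only [if_neg h, add_zero]
  refine ⟨fun x => C x x, fun x y => ?_⟩
  show C (x + y) (x + y) = C x x + C y y + B x y
  rw [hadd, hadd', hadd', ← key x y]
  have : ∀ a b c d : ZMod 2, a + c + (d + b) = a + b + (c + d) := by decide
  exact this _ _ _ _

end QRArfAux

/-- **Column sums of the Arf-weighted sign matrix.**
Let `B` be an alternating bilinear form on a finite `𝔽₂`-vector space `V` and `Q` the set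
of quadratic refinements of `B`. Then for every `x : V`,
`∑ q ∈ Q, (-1)^(q x) * (∑ x', (-1)^(q x')) = Fintype.card V`
(when `dim V = 2g` this says `∑ q, Arf(q) * (-1)^(q x) = 2^g`). -/
theorem quadRefinement_arf_column_sum {V : Type*} [AddCommGroup V] [Module (ZMod 2) V]
    [Fintype V] (B : V →ₗ[ZMod 2] V →ₗ[ZMod 2] ZMod 2)
    (halt : ∀ x : V, B x x = 0) :
    ∀ x : V,
      ∑ q : {q : V → ZMod 2 // ∀ x y, q (x + y) = q x + q y + B x y},
        ((-1 : ℤ) ^ (q.1 x).val * ∑ x' : V, (-1 : ℤ) ^ (q.1 x').val)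
      = Fintype.card V := by
  set Qt := {q : V → ZMod 2 // ∀ x y, q (x + y) = q x + q y + B x y} with hQt
  obtain ⟨q0, hq0⟩ := QRArfAux.exists_qr B halt
  -- refinements vanish at 0
  have hzero0 : ∀ q : V → ZMod 2, (∀ x y, q (x + y) = q x + q y + B x y) → q 0 = 0 := by
    intro q hq
    have h := hq 0 0
    simp only [add_zero, map_zero, LinearMap.zero_apply] at h
    exact (left_eq_add.mp h)
  have hzero : ∀ q : Qt, q.1 0 = 0 := fun q => hzero0 q.1 q.2
  -- the equivalence with the dual space
  have eqv : Qt ≃ Module.Dual (ZMod 2) V :=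
    { toFun := fun q => AddMonoidHom.toZModLinearMap 2
        { toFun := fun w => q.1 w + q0 w
          map_zero' := by
            show q.1 0 + q0 0 = 0
            rw [hzero q, hzero0 q0 hq0, add_zero]
          map_add' := by
            intro a b
            show q.1 (a + b) + q0 (a + b) = (q.1 a + q0 a) + (q.1 b + q0 b)
            rw [q.2 a b, hq0 a b]
            exact QRArfAux.quad_add _ _ _ _ _ }
      invFun := fun f => ⟨fun w => q0 w + f w, by
        intro a b
        show q0 (a + b) + f (a + b) = (q0 a + f a) + (q0 b + f b) + B a b
        rw [hq0 a b, map_add]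
        exact QRArfAux.quad_add' _ _ _ _ _⟩
      left_inv := by
        intro q
        apply Subtype.ext
        funext w
        show q0 w + (q.1 w + q0 w) = q.1 w
        exact (QRArfAux.hre _ _).symm
      right_inv := by
        intro f
        apply LinearMap.ext
        intro w
        show (q0 w + f w) + q0 w = f w
        rw [add_comm (q0 w) (f w)]
        exact QRArfAux.hcanc _ _ }
  haveI : Fintype (Module.Dual (ZMod 2) V) := Fintype.ofEquiv Qt eqv
  have hcardQ : Fintype.card Qt = Fintype.card V := by
    rw [Fintype.card_congr eqv]
    have h1 : Fintype.card V
        = Fintype.card (ZMod 2) ^ Module.finrank (ZMod 2) V := Module.card_eq_pow_finrank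
    have h2 : Fintype.card (Module.Dual (ZMod 2) V)
        = Fintype.card (ZMod 2) ^ Module.finrank (ZMod 2) (Module.Dual (ZMod 2) V) :=
      Module.card_eq_pow_finrank
    rw [h1, h2, Subspace.dual_finrank_eq]
  -- the column sum function
  set T : V → ℤ := fun v => ∑ q : Qt, (-1 : ℤ) ^ ((q.1 v).val) with hT
  have hTdef : ∀ v : V, T v = ∑ q : Qt, (-1 : ℤ) ^ ((q.1 v).val) := fun v => rfl
  have hT0 : T 0 = (Fintype.card V : ℤ) := by
    rw [hTdef]
    calc (∑ q : Qt, (-1 : ℤ) ^ ((q.1 0).val))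
        = ∑ _q : Qt, (1 : ℤ) := Finset.sum_congr rfl fun q _ => by rw [hzero q]; norm_num
      _ = (Fintype.card Qt : ℤ) := by simp
      _ = (Fintype.card V : ℤ) := by exact_mod_cast congrArg Nat.cast hcardQ
  have hTne : ∀ v : V, v ≠ 0 → T v = 0 := by
    intro v hv
    obtain ⟨f, hf⟩ : ∃ f : Module.Dual (ZMod 2) V, f v ≠ 0 := by
      by_contra h
      push_neg at h
      exact hv ((Module.forall_dual_apply_eq_zero_iff (ZMod 2) v).mp h)
    have hfv : f v = 1 := by revert hf; generalize f v = a; revert a; decide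
    let σ : Qt ≃ Qt :=
      { toFun := fun q => ⟨fun w => q.1 w + f w, by
          intro a b
          show q.1 (a + b) + f (a + b) = (q.1 a + f a) + (q.1 b + f b) + B a b
          rw [q.2 a b, map_add]
          exact QRArfAux.quad_add' _ _ _ _ _⟩
        invFun := fun q => ⟨fun w => q.1 w + f w, by
          intro a b
          show q.1 (a + b) + f (a + b) = (q.1 a + f a) + (q.1 b + f b) + B a b
          rw [q.2 a b, map_add]
          exact QRArfAux.quad_add' _ _ _ _ _⟩
        left_inv := by
          intro q; apply Subtype.ext; funext w
          show (q.1 w + f w) + f w = q.1 w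
          exact QRArfAux.hcanc _ _
        right_inv := by
          intro q; apply Subtype.ext; funext w
          show (q.1 w + f w) + f w = q.1 w
          exact QRArfAux.hcanc _ _ }
    have h2 : ∀ q : Qt, (-1 : ℤ) ^ (((σ q).1 v).val) = -((-1 : ℤ) ^ ((q.1 v).val)) := by
      intro q
      show (-1 : ℤ) ^ ((q.1 v + f v).val) = _
      rw [hfv, QRArfAux.e_add]
      norm_num [ZMod.val_one]
    have hkey : T v = -T v := by
      calc T v = ∑ q : Qt, (-1 : ℤ) ^ (((σ q).1 v).val) :=
          (Equiv.sum_comp σ (fun q : Qt => (-1 : ℤ) ^ ((q.1 v).val))).symm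
        _ = ∑ q : Qt, -((-1 : ℤ) ^ ((q.1 v).val)) := Finset.sum_congr rfl fun q _ => h2 q
        _ = -T v := by rw [hTdef]; exact Finset.sum_neg_distrib _
    linarith
  -- main computation
  intro x
  calc (∑ q : Qt, ((-1 : ℤ) ^ ((q.1 x).val) * ∑ x' : V, (-1 : ℤ) ^ ((q.1 x').val)))
      = ∑ q : Qt, ∑ x' : V, (-1 : ℤ) ^ ((q.1 x).val) * (-1 : ℤ) ^ ((q.1 x').val) := by
        exact Finset.sum_congr rfl fun q _ => by rw [Finset.mul_sum]
    _ = ∑ x' : V, ∑ q : Qt, (-1 : ℤ) ^ ((q.1 x).val) * (-1 : ℤ) ^ ((q.1 x').val) :=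
        Finset.sum_comm
    _ = ∑ x' : V, ((-1 : ℤ) ^ ((B x x').val) * T (x + x')) := by
        refine Finset.sum_congr rfl fun x' _ => ?_
        rw [hTdef, Finset.mul_sum]
        refine Finset.sum_congr rfl fun q _ => ?_
        rw [← QRArfAux.e_add, ← QRArfAux.e_add]
        congr 1
        have : q.1 x + q.1 x' = B x x' + q.1 (x + x') := by
          rw [q.2 x x']
          exact QRArfAux.hre _ _
        rw [this]
    _ = (-1 : ℤ) ^ ((B x x).val) * T (x + x) := by
        refine Finset.sum_eq_single x ?_ ?_
        · intro x' _ hne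
          have hvne : x + x' ≠ 0 := by
            intro h
            apply hne
            calc x' = (x + x) + x' := by rw [QRArfAux.vadd_self, zero_add]
              _ = x + (x + x') := by rw [add_assoc]
              _ = x := by rw [h, add_zero]
          rw [hTne _ hvne, mul_zero]
        · intro h; exact absurd (Finset.mem_univ x) h
    _ = (Fintype.card V : ℤ) := by
        rw [QRArfAux.vadd_self, halt, hT0]
        simp
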